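/- arXiv:1405.4176 — 4 statements merged into one kernel-verified Lean document; each statement's English description precedes it below -/
import Mathlib

section
/- For a, s > 0 and 0 < b ≤ 1, the function f_{a,b,s}(x) = (Γ(a+b)/(s·Γ(a)Γ(b))) (x+1)^{(1-a-b)/s - 1} ((x+1)^{1/s} - 1)^{b-1} is log-convex on (0, ∞). Conversely, if b > 1 then f_{a,b,s} is not log-convex on (0, ∞). -/
open Real

noncomputable def fBeta (a b s x : ℝ) : ℝ :=
  (Gamma (a + b) / (s * Gamma a * Gamma b)) * (x + 1) ^ ((1 - a - b) / s - 1)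
    * ((x + 1) ^ (1 / s) - 1) ^ (b - 1)

private lemma convexOn_congr' {s : Set ℝ} {f g : ℝ → ℝ} (h : ConvexOn ℝ s f)
    (he : ∀ x ∈ s, f x = g x) : ConvexOn ℝ s g :=
  ⟨h.1, fun x hx y hy p q hp hq hpq => by
    rw [← he x hx, ← he y hy, ← he _ (h.1 hx hy hp hq hpq)]
    exact h.2 hx hy hp hq hpq⟩

private lemma convexOn_comp'' {s t : Set ℝ} {f g : ℝ → ℝ} (hg : ConvexOn ℝ t g)
    (hf : ConvexOn ℝ s f) (hg' : MonotoneOn g t) (hmap : ∀ x ∈ s, f x ∈ t) :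
    ConvexOn ℝ s (fun x => g (f x)) :=
  ⟨hf.1, fun x hx y hy p q hp hq hpq => by
    have h1 : f (p • x + q • y) ∈ t := hmap _ (hf.1 hx hy hp hq hpq)
    have h2 : p • f x + q • f y ∈ t := hg.1 (hmap _ hx) (hmap _ hy) hp hq hpq
    calc g (f (p • x + q • y)) ≤ g (p • f x + q • f y) :=
          hg' h1 h2 (hf.2 hx hy hp hq hpq)
      _ ≤ p • g (f x) + q • g (f y) := hg.2 (hmap _ hx) (hmap _ hy) hp hq hpq⟩

private lemma concaveOn_log_add_one : ConcaveOn ℝ (Set.Ioi (0:ℝ)) (fun x => Real.log (x + 1)) :=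
  ⟨convex_Ioi 0, fun x hx y hy p q hp hq hpq => by
    have hx1 : x + 1 ∈ Set.Ioi (0:ℝ) := by
      simp only [Set.mem_Ioi] at hx ⊢; linarith
    have hy1 : y + 1 ∈ Set.Ioi (0:ℝ) := by
      simp only [Set.mem_Ioi] at hy ⊢; linarith
    have h := strictConcaveOn_log_Ioi.concaveOn.2 hx1 hy1 hp hq hpq
    have heq : p • (x + 1) + q • (y + 1) = p • x + q • y + 1 := by
      simp only [smul_eq_mul]; linear_combination hpq
    rw [heq] at h
    exact h⟩

private lemma concaveOn_log_one_sub : ConcaveOn ℝ (Set.Iio (1:ℝ)) (fun t => Real.log (1 - t)) :=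
  ⟨convex_Iio 1, fun x hx y hy p q hp hq hpq => by
    have hx1 : 1 - x ∈ Set.Ioi (0:ℝ) := by
      simp only [Set.mem_Iio] at hx; simp only [Set.mem_Ioi]; linarith
    have hy1 : 1 - y ∈ Set.Ioi (0:ℝ) := by
      simp only [Set.mem_Iio] at hy; simp only [Set.mem_Ioi]; linarith
    have h := strictConcaveOn_log_Ioi.concaveOn.2 hx1 hy1 hp hq hpq
    have heq : p • (1 - x) + q • (1 - y) = 1 - (p • x + q • y) := by
      simp only [smul_eq_mul]; linear_combination hpq
    rw [heq] at h
    exact h⟩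

private lemma monotoneOn_neg_log_one_sub :
    MonotoneOn (fun t => -Real.log (1 - t)) (Set.Iio (1:ℝ)) := by
  intro x hx y hy hxy
  simp only [Set.mem_Iio] at hx hy
  have h2 : (0:ℝ) < 1 - y := by linarith
  have h1 : (0:ℝ) < 1 - x := by linarith
  have := (Real.log_le_log_iff h2 h1).mpr (by linarith)
  simp only [neg_le_neg_iff]
  linarith

theorem fBeta_logConvex_iff (a b s : ℝ) (ha : 0 < a) (hb : 0 < b) (hs : 0 < s) :
    ConvexOn ℝ (Set.Ioi 0) (fun x => Real.log (fBeta a b s x)) ↔ b ≤ 1 := by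
  have hc0 : 0 < 1 / s := by positivity
  have hGab := Real.Gamma_pos_of_pos (by linarith : 0 < a + b)
  have hGa := Real.Gamma_pos_of_pos ha
  have hGb := Real.Gamma_pos_of_pos hb
  set C : ℝ := Gamma (a + b) / (s * Gamma a * Gamma b) with hCdef
  have hC : 0 < C := by positivity
  -- basic facts on Ioi 0
  have hx1' : ∀ x ∈ Set.Ioi (0:ℝ), (0:ℝ) < x + 1 := by
    intro x hx; simp only [Set.mem_Ioi] at hx; linarith
  have hx1 : ∀ x ∈ Set.Ioi (0:ℝ), (1:ℝ) < x + 1 := by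
    intro x hx; simp only [Set.mem_Ioi] at hx; linarith
  have hz : ∀ x ∈ Set.Ioi (0:ℝ), (1:ℝ) < (x + 1) ^ (1 / s) :=
    fun x hx => (Real.one_lt_rpow_iff_of_pos (hx1' x hx)).mpr (Or.inl ⟨hx1 x hx, hc0⟩)
  have hu : ∀ x ∈ Set.Ioi (0:ℝ), (x + 1) ^ (-(1 / s)) < 1 :=
    fun x hx => Real.rpow_lt_one_of_one_lt_of_neg (hx1 x hx) (by linarith)
  have hu0 : ∀ x ∈ Set.Ioi (0:ℝ), (0:ℝ) < (x + 1) ^ (-(1 / s)) :=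
    fun x hx => Real.rpow_pos_of_pos (hx1' x hx) _
  -- first identity
  have key : ∀ x ∈ Set.Ioi (0:ℝ), Real.log (fBeta a b s x)
      = (Real.log C + ((1 - a - b) / s - 1) * Real.log (x + 1))
        + (b - 1) * Real.log ((x + 1) ^ (1 / s) - 1) := by
    intro x hx
    have h1 := hx1' x hx
    have hz0 : (0:ℝ) < (x + 1) ^ (1 / s) - 1 := by have := hz x hx; linarith
    rw [fBeta, ← hCdef]
    rw [Real.log_mul (by positivity) (by positivity),
      Real.log_mul (by positivity) (by positivity),
      Real.log_rpow h1, Real.log_rpow hz0]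
  -- second identity, convexity-friendly form
  have key2 : ∀ x ∈ Set.Ioi (0:ℝ), Real.log (fBeta a b s x)
      = (Real.log C + -((a / s + 1) * Real.log (x + 1)))
        + (1 - b) * (-Real.log (1 - (x + 1) ^ (-(1 / s)))) := by
    intro x hx
    have h1 := hx1' x hx
    have hz0 : (0:ℝ) < (x + 1) ^ (1 / s) - 1 := by have := hz x hx; linarith
    have hu1 : (0:ℝ) < 1 - (x + 1) ^ (-(1 / s)) := by have := hu x hx; linarith
    have hsplit : Real.log ((x + 1) ^ (1 / s) - 1)
        = Real.log (1 - (x + 1) ^ (-(1 / s))) + (1 / s) * Real.log (x + 1) := by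
      rw [← Real.log_rpow h1, ← Real.log_mul (ne_of_gt hu1)
        (ne_of_gt (Real.rpow_pos_of_pos h1 _))]
      congr 1
      rw [sub_mul, one_mul, ← Real.rpow_add h1]
      norm_num
    rw [key x hx, hsplit]
    ring
  constructor
  · -- convex → b ≤ 1
    intro hconv
    by_contra hb1
    push_neg at hb1
    set g : ℝ → ℝ := fun x => Real.log (fBeta a b s x) with hgdef
    -- tendsto atBot at 0+
    have hadd1 : ContinuousAt (fun x : ℝ => x + 1) (0:ℝ) := by fun_prop
    have hlogcont : ContinuousAt (fun x : ℝ => Real.log (x + 1)) 0 := by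
      have h : ContinuousAt Real.log ((fun x : ℝ => x + 1) 0) :=
        Real.continuousAt_log (by norm_num)
      exact ContinuousAt.comp (f := fun x : ℝ => x + 1) h hadd1
    have hT1 : Filter.Tendsto (fun x : ℝ => Real.log C + ((1 - a - b) / s - 1) * Real.log (x + 1))
        (nhdsWithin 0 (Set.Ioi 0))
        (nhds (Real.log C + ((1 - a - b) / s - 1) * Real.log ((0:ℝ) + 1))) := by
      exact ((continuousAt_const.add (continuousAt_const.mul hlogcont))).tendsto.mono_left
        nhdsWithin_le_nhds
    have hT2a : Filter.Tendsto (fun x : ℝ => (x + 1) ^ (1 / s) - 1)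
        (nhdsWithin 0 (Set.Ioi 0)) (nhdsWithin 0 (Set.Ioi 0)) := by
      rw [tendsto_nhdsWithin_iff]
      constructor
      · have hcont : ContinuousAt (fun x : ℝ => (x + 1) ^ (1 / s) - 1) 0 := by
          have h1 : ContinuousAt (fun y : ℝ => y ^ (1 / s)) ((fun x : ℝ => x + 1) 0) :=
            Real.continuousAt_rpow_const _ _ (Or.inl (by norm_num))
          have hadd1 : ContinuousAt (fun x : ℝ => x + 1) (0:ℝ) := by fun_prop
          exact (ContinuousAt.comp (f := fun x : ℝ => x + 1) h1 hadd1).sub continuousAt_const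
        have := hcont.tendsto.mono_left
          (nhdsWithin_le_nhds (s := Set.Ioi (0:ℝ)))
        simpa [Real.one_rpow] using this
      · exact Filter.eventually_of_mem self_mem_nhdsWithin
          (fun x hx => by have := hz x hx; simp only [Set.mem_Ioi]; linarith)
    have hT2b : Filter.Tendsto (fun x : ℝ => Real.log ((x + 1) ^ (1 / s) - 1))
        (nhdsWithin 0 (Set.Ioi 0)) Filter.atBot :=
      Real.tendsto_log_nhdsGT_zero.comp hT2a
    have hT2 : Filter.Tendsto (fun x : ℝ => (b - 1) * Real.log ((x + 1) ^ (1 / s) - 1))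
        (nhdsWithin 0 (Set.Ioi 0)) Filter.atBot :=
      (Filter.tendsto_const_mul_atBot_of_pos (by linarith : 0 < b - 1)).mpr hT2b
    have hT : Filter.Tendsto g (nhdsWithin 0 (Set.Ioi 0)) Filter.atBot := by
      refine (hT1.add_atBot hT2).congr' ?_
      exact Filter.eventuallyEq_of_mem self_mem_nhdsWithin (fun x hx => (key x hx).symm)
    -- choose a bad point
    set M : ℝ := min (2 * (g 1 - |g 2|)) 0 - 1 with hMdef
    have hev1 := hT.eventually (Filter.eventually_lt_atBot M)
    have hev2 : Set.Ioo (0:ℝ) 1 ∈ nhdsWithin (0:ℝ) (Set.Ioi 0) :=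
      Ioo_mem_nhdsGT_of_mem ⟨le_refl 0, one_pos⟩
    obtain ⟨x, hxM, hx01⟩ := (hev1.and (Filter.eventually_of_mem hev2 (fun x hx => hx))).exists
    obtain ⟨hx0, hxlt1⟩ := hx01
    -- convexity at x, 2 with midpoint 1
    set t : ℝ := 1 / (2 - x) with htdef
    have h2x : (0:ℝ) < 2 - x := by linarith
    have htlb : (1:ℝ)/2 ≤ t := by
      rw [htdef, div_le_div_iff₀ (by norm_num) h2x]; linarith
    have htub : t ≤ 1 := by
      rw [htdef, div_le_one h2x]; linarith
    have hcv := hconv.2 (show x ∈ Set.Ioi (0:ℝ) from hx0)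
      (show (2:ℝ) ∈ Set.Ioi (0:ℝ) by norm_num)
      (by linarith : (0:ℝ) ≤ t) (by linarith : (0:ℝ) ≤ 1 - t) (by ring)
    have hpt : t • x + (1 - t) • (2:ℝ) = 1 := by
      simp only [smul_eq_mul, htdef]
      field_simp
      ring
    rw [hpt] at hcv
    simp only [smul_eq_mul] at hcv
    -- hcv : g 1 ≤ t * g x + (1 - t) * g 2
    have hgxM : g x < M := hxM
    have hgxneg : g x < 0 := by
      have : M ≤ 0 - 1 := by
        rw [hMdef]; have := min_le_right (2 * (g 1 - |g 2|)) (0:ℝ); linarith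
      linarith
    have hgx2 : g x < 2 * (g 1 - |g 2|) - 1 := by
      have : M ≤ 2 * (g 1 - |g 2|) - 1 := by
        rw [hMdef]; have := min_le_left (2 * (g 1 - |g 2|)) (0:ℝ); linarith
      linarith
    have hstep1 : t * g x ≤ (1/2) * g x := by nlinarith
    have hstep2 : (1 - t) * g 2 ≤ |g 2| := by
      have h1 := le_abs_self (g 2)
      have h2 := abs_nonneg (g 2)
      nlinarith
    linarith
  · -- b ≤ 1 → convex
    intro hb1
    have h1 : ConvexOn ℝ (Set.Ioi (0:ℝ))
        (fun x => Real.log C + -((a / s + 1) * Real.log (x + 1))) := by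
      have hcc : ConcaveOn ℝ (Set.Ioi (0:ℝ)) (fun x => (a / s + 1) * Real.log (x + 1)) := by
        have := concaveOn_log_add_one.smul (by positivity : (0:ℝ) ≤ a / s + 1)
        simpa [smul_eq_mul] using this
      exact (convexOn_const _ (convex_Ioi 0)).add hcc.neg
    have hinner : ConvexOn ℝ (Set.Ioi (0:ℝ)) (fun x => (x + 1) ^ (-(1 / s))) := by
      have hcc2 : ConcaveOn ℝ (Set.Ioi (0:ℝ)) (fun x => (1 / s) * Real.log (x + 1)) := by
        have := concaveOn_log_add_one.smul (le_of_lt hc0)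
        simpa [smul_eq_mul] using this
      have hlin : ConvexOn ℝ (Set.Ioi (0:ℝ)) (fun x => -((1 / s) * Real.log (x + 1))) :=
        hcc2.neg
      have hcomp := convexOn_comp'' (t := Set.univ) (g := Real.exp)
        (f := fun x => -((1 / s) * Real.log (x + 1))) (convexOn_exp) hlin
        (Real.exp_monotone.monotoneOn _) (fun x _ => Set.mem_univ _)
      refine convexOn_congr' hcomp (fun x hx => ?_)
      rw [Real.rpow_def_of_pos (hx1' x hx)]
      congr 1
      ring
    have houter : ConvexOn ℝ (Set.Iio (1:ℝ)) (fun t => -Real.log (1 - t)) :=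
      concaveOn_log_one_sub.neg
    have hpsi : ConvexOn ℝ (Set.Ioi (0:ℝ))
        (fun x => -Real.log (1 - (x + 1) ^ (-(1 / s)))) :=
      convexOn_comp'' (t := Set.Iio (1:ℝ)) (g := fun t => -Real.log (1 - t))
        (f := fun x => (x + 1) ^ (-(1 / s))) houter hinner monotoneOn_neg_log_one_sub
        (fun x hx => Set.mem_Iio.mpr (hu x hx))
    have hsum : ConvexOn ℝ (Set.Ioi (0:ℝ))
        (fun x => (Real.log C + -((a / s + 1) * Real.log (x + 1)))
          + (1 - b) * (-Real.log (1 - (x + 1) ^ (-(1 / s))))) := by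
      have := h1.add (hpsi.smul (by linarith : (0:ℝ) ≤ 1 - b))
      exact this
    exact convexOn_congr' hsum (fun x hx => (key2 x hx).symm)
end

section
/- For a, b, s > 0, one has the evaluation 1 - ∫₀^∞ ρ_{a,b,s}(x) dx = Γ(a+b)Γ(a+s)/(Γ(a)Γ(a+b+s)), where ρ_{a,b,s}(x) = b s e^{-(a+b)x} ₂F₁(1+b, 1-s; 2; 1-e^{-x}). -/
open Real MeasureTheory

noncomputable def poch (x : ℝ) (n : ℕ) : ℝ := (ascPochhammer ℝ n).eval x

noncomputable def hyp2F1 (l m v z : ℝ) : ℝ :=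
  ∑' n : ℕ, poch l n * poch m n / (poch v n * n.factorial) * z ^ n

noncomputable def rho (a b s x : ℝ) : ℝ :=
  b * s * Real.exp (-(a + b) * x) * hyp2F1 (1 + b) (1 - s) 2 (1 - Real.exp (-x))

namespace RhoAux


lemma poch_zero (x : ℝ) : poch x 0 = 1 := by simp [poch]

lemma poch_succ (x : ℝ) (n : ℕ) : poch x (n+1) = poch x n * (x + n) := by
  simp [poch, ascPochhammer_succ_right, Polynomial.eval_mul]

lemma poch_succ_left (x : ℝ) (n : ℕ) : poch x (n+1) = x * poch (x+1) n := by
  simp [poch, ascPochhammer_succ_left, Polynomial.eval_mul, Polynomial.eval_comp]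

lemma poch_pos {x : ℝ} (hx : 0 < x) (n : ℕ) : 0 < poch x n := by
  induction n with
  | zero => simp [poch_zero]
  | succ n ih => rw [poch_succ]; positivity

lemma poch_one (n : ℕ) : poch 1 n = n.factorial := by
  induction n with
  | zero => simp [poch_zero]
  | succ n ih => rw [poch_succ, ih, Nat.factorial_succ]; push_cast; ring

lemma poch_two (n : ℕ) : poch 2 n = (n+1).factorial := by
  induction n with
  | zero => simp [poch_zero]
  | succ n ih =>
      rw [poch_succ, ih]
      have : (n+1+1).factorial = (n+1).factorial * (n+2) := by
        rw [Nat.factorial_succ]; ring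
      rw [this]; push_cast; ring

lemma poch_le_poch {x y : ℝ} (hx : 0 < x) (hxy : x ≤ y) (n : ℕ) : poch x n ≤ poch y n := by
  induction n with
  | zero => simp [poch_zero]
  | succ n ih =>
      rw [poch_succ, poch_succ]
      have h1 : (0:ℝ) < x + n := by positivity
      exact mul_le_mul ih (by linarith) h1.le ((poch_pos (lt_of_lt_of_le hx hxy) n)).le

lemma Gamma_poch {x : ℝ} (hx : 0 < x) (n : ℕ) :
    Real.Gamma (x + n) = Real.Gamma x * poch x n := by
  induction n with
  | zero => simp [poch_zero]
  | succ n ih =>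
      have hxn : x + (n:ℝ) ≠ 0 := by positivity
      have : x + ((n:ℕ)+1:ℕ) = (x + n) + 1 := by push_cast; ring
      rw [this, Real.Gamma_add_one hxn, ih, poch_succ]; ring


noncomputable def cc (s : ℝ) (m : ℕ) : ℝ := poch (-s) m / m.factorial

lemma cc_zero (s : ℝ) : cc s 0 = 1 := by simp [cc, poch_zero]

lemma cc_succ (s : ℝ) (m : ℕ) : cc s (m+1) * (m+1) = cc s m * ((m:ℝ) - s) := by
  have h1 : ((m+1).factorial : ℝ) = (m.factorial : ℝ) * (m+1) := by
    rw [Nat.factorial_succ]; push_cast; ring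
  have h2 : (m.factorial : ℝ) ≠ 0 := Nat.cast_ne_zero.mpr m.factorial_ne_zero
  have h3 : ((m:ℝ)+1) ≠ 0 := by positivity
  simp only [cc, h1, poch_succ]
  field_simp
  ring

lemma abs_cc_succ {s : ℝ} {m : ℕ} (hm : s ≤ m) :
    |cc s (m+1)| * (m+1) = |cc s m| * ((m:ℝ) - s) := by
  have := congrArg abs (cc_succ s m)
  rw [abs_mul, abs_mul, abs_of_nonneg (by linarith : (0:ℝ) ≤ (m:ℝ) - s),
    abs_of_nonneg (by positivity : (0:ℝ) ≤ (m:ℝ)+1)] at this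
  exact_mod_cast this

/-- `m * |cc s m|` is antitone past `⌈s⌉₊`. -/
lemma mul_abs_cc_antitone {s : ℝ} (hs : 0 < s) {m n : ℕ} (hm : s ≤ m) (hmn : m ≤ n) :
    (n:ℝ) * |cc s n| ≤ (m:ℝ) * |cc s m| := by
  induction n with
  | zero =>
      have h0 : m = 0 := Nat.le_zero.mp hmn
      subst h0; exact le_refl _
  | succ n ih =>
      rcases Nat.lt_or_ge m (n+1) with h | h
      · have hmn' : m ≤ n := by omega
        have hsn : s ≤ n := le_trans hm (by exact_mod_cast Nat.cast_le.mpr hmn')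
        have key : ((n:ℝ)+1) * |cc s (n+1)| ≤ (n:ℝ) * |cc s n| := by
          rw [mul_comm, abs_cc_succ hsn]
          have : (0:ℝ) ≤ |cc s n| := abs_nonneg _
          nlinarith
        calc ((n+1:ℕ):ℝ) * |cc s (n+1)| = ((n:ℝ)+1) * |cc s (n+1)| := by push_cast; ring
          _ ≤ (n:ℝ) * |cc s n| := key
          _ ≤ (m:ℝ) * |cc s m| := ih hmn'
      · have : m = n+1 := by omega
        subst this; rfl

lemma exists_bound_mul_abs_cc {s : ℝ} (hs : 0 < s) :
    ∃ K : ℝ, 0 ≤ K ∧ ∀ m : ℕ, (m:ℝ) * |cc s m| ≤ K := by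
  set N := ⌈s⌉₊ with hN
  refine ⟨∑ j ∈ Finset.range (N+1), (j:ℝ) * |cc s j|, ?_, ?_⟩
  · exact Finset.sum_nonneg fun j _ => by positivity
  · intro m
    rcases Nat.lt_or_ge m (N+1) with h | h
    · exact Finset.single_le_sum (f := fun j : ℕ => (j:ℝ) * |cc s j|)
        (fun j _ => by positivity) (Finset.mem_range.mpr h)
    · have h1 : s ≤ N := Nat.le_ceil s
      have h2 : (N:ℝ) * |cc s N| ≤ ∑ j ∈ Finset.range (N+1), (j:ℝ) * |cc s j| :=
        Finset.single_le_sum (f := fun j : ℕ => (j:ℝ) * |cc s j|)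
          (fun j _ => by positivity) (Finset.mem_range.mpr (by omega))
      exact le_trans (mul_abs_cc_antitone hs h1 (by omega)) h2

lemma summable_abs_cc {s : ℝ} (hs : 0 < s) : Summable (fun m => |cc s m|) := by
  set N := ⌈s⌉₊ with hN
  rw [← summable_nat_add_iff N]
  apply summable_of_sum_range_le (c := ((N:ℝ) * |cc s N|) / s)
    (fun n => abs_nonneg _)
  intro n
  have key : ∀ m : ℕ, |cc s (m + N)| = ((((m+N:ℕ)):ℝ) * |cc s (m+N)|
      - (((m+N+1:ℕ)):ℝ) * |cc s (m+N+1)|) / s := by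
    intro m
    have h0 : s ≤ (N:ℝ) := Nat.le_ceil s
    have hsm : s ≤ ((m+N:ℕ):ℝ) := by push_cast; push_cast at h0; linarith [Nat.cast_nonneg (α := ℝ) m]
    have := abs_cc_succ (m := m+N) hsm
    have hs' : s ≠ 0 := hs.ne'
    field_simp
    push_cast at this ⊢
    linarith
  calc ∑ i ∈ Finset.range n, |cc s (i + N)|
      = ∑ i ∈ Finset.range n, ((((i+N:ℕ)):ℝ) * |cc s (i+N)|
          - (((i+N+1:ℕ)):ℝ) * |cc s (i+N+1)|) / s := by
        exact Finset.sum_congr rfl fun i _ => key i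
    _ = (∑ i ∈ Finset.range n, ((fun j => (((j+N:ℕ)):ℝ) * |cc s (j+N)|) i
          - (fun j => (((j+N:ℕ)):ℝ) * |cc s (j+N)|) (i+1))) / s := by
        rw [← Finset.sum_div]
        congr 1
        exact Finset.sum_congr rfl fun i _ => by norm_num [Nat.add_right_comm]
    _ = ((((0+N:ℕ)):ℝ) * |cc s (0+N)| - (((n+N:ℕ)):ℝ) * |cc s (n+N)|) / s := by
        rw [Finset.sum_range_sub']
    _ ≤ ((N:ℝ) * |cc s N|) / s := by
        gcongr
        simp only [Nat.zero_add]
        nlinarith [abs_nonneg (cc s (n+N)), Nat.cast_nonneg (α := ℝ) (n+N)]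


lemma summable_cc_pow {s : ℝ} (hs : 0 < s) {t : ℝ} (ht0 : 0 ≤ t) (ht1 : t ≤ 1) :
    Summable (fun m => cc s m * t ^ m) := by
  apply Summable.of_norm_bounded (summable_abs_cc hs)
  intro m
  rw [norm_mul, Real.norm_eq_abs, Real.norm_eq_abs, abs_pow, abs_of_nonneg ht0]
  calc |cc s m| * t ^ m ≤ |cc s m| * 1 := by
        exact mul_le_mul_of_nonneg_left (pow_le_one₀ ht0 ht1) (abs_nonneg _)
    _ = |cc s m| := mul_one _

/-- The key telescoping polynomial identity. -/
lemma poly_identity (s x : ℝ) (n : ℕ) :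
    (1 - x) * (∑ m ∈ Finset.range n, cc s m * ((m:ℝ) * x ^ (m-1))) +
      s * (∑ m ∈ Finset.range n, cc s m * x ^ m)
      = -((n:ℝ) * cc s n * x ^ (n-1)) := by
  induction n with
  | zero => simp
  | succ n ih =>
      rw [Finset.sum_range_succ, Finset.sum_range_succ]
      have key : cc s (n+1) * ((n:ℝ)+1) = cc s n * ((n:ℝ) - s) := by
        have := cc_succ s n; push_cast at this ⊢; linarith
      rcases Nat.eq_zero_or_pos n with h0 | hp
      · subst h0
        have k0 : cc s 1 = -s := by
          have := cc_succ s 0; push_cast at this; simp [cc_zero] at this; linarith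
        simp [cc_zero, k0]
      · have hx1 : x ^ (n - 1) * x = x ^ n := by
          conv_rhs => rw [← Nat.succ_pred_eq_of_pos hp]
          rw [pow_succ]
          congr 1
        have hn1 : (n+1) - 1 = n := rfl
        rw [hn1]
        push_cast
        linear_combination ih - (cc s n * (n:ℝ)) * hx1 + (x^n) * key

lemma hasDerivAt_P (s x : ℝ) (n : ℕ) :
    HasDerivAt (fun y => ∑ m ∈ Finset.range n, cc s m * y ^ m)
      (∑ m ∈ Finset.range n, cc s m * ((m:ℝ) * x ^ (m-1))) x := by
  apply HasDerivAt.fun_sum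
  intro m _
  simpa using (hasDerivAt_pow m x).const_mul (cc s m)

lemma hasDerivAt_g {s : ℝ} (n : ℕ) {x : ℝ} (hx : x < 1) :
    HasDerivAt (fun y => (∑ m ∈ Finset.range n, cc s m * y ^ m) * (1 - y) ^ (-s))
      (-((n:ℝ) * cc s n * x ^ (n-1)) * (1 - x) ^ (-s-1)) x := by
  have h1x : (0:ℝ) < 1 - x := by linarith
  have hr : HasDerivAt (fun y : ℝ => (1 - y) ^ (-s)) (s * (1 - x) ^ (-s-1)) x := by
    have h1 : HasDerivAt (fun y : ℝ => 1 - y) (-1) x := by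
      simpa using (hasDerivAt_id x).const_sub 1
    have h2 := (Real.hasDerivAt_rpow_const (x := 1 - x) (p := -s) (Or.inl h1x.ne')).comp x h1
    refine h2.congr_deriv ?_
    ring
  have := (hasDerivAt_P s x n).fun_mul hr
  refine this.congr_deriv ?_
  have hsplit : (1 - x) ^ (-s) = (1 - x) ^ (-s-1) * (1 - x) := by
    rw [← Real.rpow_add_one h1x.ne' (-s-1)]; ring_nf
  rw [hsplit]
  have h := poly_identity s x n
  linear_combination ((1 - x)^(-s-1)) * h

lemma tendsto_partial_binomial {s : ℝ} (hs : 0 < s) {t : ℝ} (ht0 : 0 ≤ t) (ht1 : t < 1) :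
    Filter.Tendsto (fun n => ∑ m ∈ Finset.range n, cc s m * t ^ m)
      Filter.atTop (nhds ((1-t)^s)) := by
  obtain ⟨K, hK0, hK⟩ := exists_bound_mul_abs_cc hs
  have h1t : (0:ℝ) < 1 - t := by linarith
  -- the auxiliary function g n = P n * (1-·)^(-s) tends to 1
  have key : ∀ n : ℕ, 1 ≤ n →
      |(∑ m ∈ Finset.range n, cc s m * t ^ m) * (1 - t) ^ (-s) - 1|
        ≤ (K * (1-t)^(-s-1)) * t ^ (n-1) := by
    intro n hn
    set g := fun y => (∑ m ∈ Finset.range n, cc s m * y ^ m) * (1 - y) ^ (-s) with hg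
    have hC : ∀ y ∈ Set.Icc (0:ℝ) t, ‖-((n:ℝ) * cc s n * y ^ (n-1)) * (1 - y) ^ (-s-1)‖
        ≤ (K * (1-t)^(-s-1)) * t ^ (n-1) := by
      intro y hy
      obtain ⟨hy0, hyt⟩ := hy
      have h1y : (0:ℝ) < 1 - y := by linarith
      simp only [norm_neg, norm_mul, Real.norm_eq_abs, abs_pow, Nat.abs_cast,
        abs_of_nonneg hy0, abs_of_nonneg (Real.rpow_nonneg h1y.le _)]
      have b1 : (n:ℝ) * |cc s n| ≤ K := hK n
      have b2 : y ^ (n-1) ≤ t ^ (n-1) := pow_le_pow_left₀ hy0 hyt _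
      have b3 : (1-y) ^ (-s-1) ≤ (1-t) ^ (-s-1) :=
        Real.rpow_le_rpow_of_nonpos h1t (by linarith) (by linarith)
      calc (n:ℝ) * |cc s n| * y ^ (n-1) * (1-y)^(-s-1)
          ≤ K * t ^ (n-1) * (1-t)^(-s-1) := by
            apply mul_le_mul _ b3 (Real.rpow_nonneg h1y.le _)
            · positivity
            · exact mul_le_mul b1 b2 (by positivity) hK0
        _ = (K * (1-t)^(-s-1)) * t ^ (n-1) := by ring
    have hderiv : ∀ y ∈ Set.Icc (0:ℝ) t,
        HasDerivWithinAt g (-((n:ℝ) * cc s n * y ^ (n-1)) * (1 - y) ^ (-s-1)) (Set.Icc 0 t) y := by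
      intro y hy
      exact (hasDerivAt_g n (by linarith [hy.2])).hasDerivWithinAt
    have hmvt := Convex.norm_image_sub_le_of_norm_hasDerivWithin_le hderiv hC (convex_Icc 0 t)
      (Set.left_mem_Icc.mpr ht0) (Set.right_mem_Icc.mpr ht0)
    have hg0 : g 0 = 1 := by
      have hsum0 : ∑ m ∈ Finset.range n, cc s m * (0:ℝ) ^ m = cc s 0 := by
        rw [Finset.sum_eq_single_of_mem 0 (Finset.mem_range.mpr hn)
          (fun m _ hm => by simp [zero_pow hm])]
        simp
      simp [hg, hsum0, cc_zero]
    rw [hg0] at hmvt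
    simp only [Real.norm_eq_abs, sub_zero] at hmvt
    calc |(∑ m ∈ Finset.range n, cc s m * t ^ m) * (1 - t) ^ (-s) - 1|
        ≤ K * (1-t)^(-s-1) * t ^ (n-1) * |t| := hmvt
      _ ≤ (K * (1-t)^(-s-1)) * t ^ (n-1) := by
          rw [abs_of_nonneg ht0]
          have hb : (0:ℝ) ≤ K * (1-t)^(-s-1) * t ^ (n-1) := by positivity
          nlinarith
  -- conclude via squeeze
  have hbt : Filter.Tendsto (fun n : ℕ => (K * (1-t)^(-s-1)) * t ^ (n-1))
      Filter.atTop (nhds 0) := by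
    have h1 : Filter.Tendsto (fun n : ℕ => t ^ (n-1)) Filter.atTop (nhds 0) :=
      (tendsto_pow_atTop_nhds_zero_of_lt_one ht0 ht1).comp (Filter.tendsto_sub_atTop_nat 1)
    simpa using h1.const_mul (K * (1-t)^(-s-1))
  have hgt : Filter.Tendsto
      (fun n => (∑ m ∈ Finset.range n, cc s m * t ^ m) * (1 - t) ^ (-s))
      Filter.atTop (nhds 1) := by
    have h0 : Filter.Tendsto
        (fun n => (∑ m ∈ Finset.range n, cc s m * t ^ m) * (1 - t) ^ (-s) - 1)
        Filter.atTop (nhds 0) := by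
      apply squeeze_zero_norm' _ hbt
      filter_upwards [Filter.eventually_ge_atTop 1] with n hn
      simpa using key n hn
    have := h0.add_const 1
    simpa using this
  have hRs : ∀ u : ℝ, u * (1-t)^(-s) * (1-t)^s = u := by
    intro u
    rw [Real.rpow_neg h1t.le, mul_assoc,
      inv_mul_cancel₀ (Real.rpow_pos_of_pos h1t s).ne']
    ring
  have := hgt.mul_const ((1-t)^s)
  rw [one_mul] at this
  simpa only [hRs] using this

lemma hasSum_binomial {s : ℝ} (hs : 0 < s) {t : ℝ} (ht0 : 0 ≤ t) (ht1 : t < 1) :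
    HasSum (fun m => cc s m * t ^ m) ((1-t)^s) := by
  have h1 := (summable_cc_pow hs ht0 ht1.le).hasSum
  have h2 := h1.tendsto_sum_nat
  have h3 := tendsto_partial_binomial hs ht0 ht1
  have := tendsto_nhds_unique h2 h3
  rwa [this] at h1

noncomputable def Bint (p q : ℝ) : ℝ := ∫ t in Set.Ioo (0:ℝ) 1, t^(p-1)*(1-t)^(q-1)

lemma complex_integrand_eq {p q : ℝ} {x : ℝ} (hx0 : 0 ≤ x) (hx1 : x ≤ 1) :
    (x:ℂ) ^ ((p:ℂ)-1) * (1-(x:ℂ)) ^ ((q:ℂ)-1) = ((x^(p-1)*(1-x)^(q-1) : ℝ) : ℂ) := by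
  have h1 : ((p:ℂ)-1) = ((p-1 : ℝ) : ℂ) := by push_cast; ring
  have h2 : ((q:ℂ)-1) = ((q-1 : ℝ) : ℂ) := by push_cast; ring
  have h3 : (1-(x:ℂ)) = ((1-x : ℝ) : ℂ) := by push_cast; ring
  rw [h1, h2, h3, ← Complex.ofReal_cpow hx0, ← Complex.ofReal_cpow (by linarith), ← Complex.ofReal_mul]

lemma integrableOn_beta {p q : ℝ} (hp : 0 < p) (hq : 0 < q) :
    IntegrableOn (fun t => t^(p-1)*(1-t)^(q-1)) (Set.Ioo (0:ℝ) 1) := by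
  have h := Complex.betaIntegral_convergent (u := (p:ℂ)) (v := (q:ℂ))
    (by simpa using hp) (by simpa using hq)
  rw [intervalIntegrable_iff_integrableOn_Ioc_of_le zero_le_one] at h
  have h2 := (h.mono_set Set.Ioo_subset_Ioc_self).re
  apply MeasureTheory.IntegrableOn.congr_fun h2 _ measurableSet_Ioo
  intro x hx
  show ((x:ℂ) ^ ((p:ℂ)-1) * (1-(x:ℂ)) ^ ((q:ℂ)-1)).re = _
  rw [complex_integrand_eq hx.1.le hx.2.le]
  simp

lemma Bint_eq {p q : ℝ} (hp : 0 < p) (hq : 0 < q) :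
    Bint p q = Gamma p * Gamma q / Gamma (p+q) := by
  have hc := Complex.Gamma_mul_Gamma_eq_betaIntegral (s := (p:ℂ)) (t := (q:ℂ))
    (by simpa using hp) (by simpa using hq)
  have hcast : Complex.betaIntegral p q = ((Bint p q : ℝ) : ℂ) := by
    rw [Complex.betaIntegral]
    rw [intervalIntegral.integral_of_le zero_le_one]
    rw [MeasureTheory.integral_Ioc_eq_integral_Ioo]
    rw [Bint]
    have hcoe : ((∫ (t : ℝ) in Set.Ioo 0 1, t ^ (p - 1) * (1 - t) ^ (q - 1) : ℝ) : ℂ)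
        = ∫ t in Set.Ioo (0:ℝ) 1, ((t ^ (p - 1) * (1 - t) ^ (q - 1) : ℝ) : ℂ) :=
      (integral_ofReal (𝕜 := ℂ)).symm
    rw [hcoe]
    apply setIntegral_congr_fun measurableSet_Ioo
    intro x hx
    exact complex_integrand_eq hx.1.le hx.2.le
  rw [hcast, Complex.Gamma_ofReal, Complex.Gamma_ofReal, ← Complex.ofReal_add,
    Complex.Gamma_ofReal, ← Complex.ofReal_mul, ← Complex.ofReal_mul] at hc
  have := Complex.ofReal_inj.mp hc
  have hG : Gamma (p+q) ≠ 0 := (Real.Gamma_pos_of_pos (by linarith)).ne'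
  field_simp
  linarith [this]


variable {a b s : ℝ}

lemma Bint_pos {p q : ℝ} (hp : 0 < p) (hq : 0 < q) : 0 < Bint p q := by
  rw [Bint_eq hp hq]
  have h1 := Real.Gamma_pos_of_pos hp
  have h2 := Real.Gamma_pos_of_pos hq
  have h3 := Real.Gamma_pos_of_pos (by linarith : 0 < p + q)
  positivity

lemma Bint_shift (ha : 0 < a) (hb : 0 < b) (m : ℕ) :
    Bint (b + m) a = Bint b a * (poch b m / poch (a+b) m) := by
  have h1 : Bint (b + m) a = Gamma (b+m) * Gamma a / Gamma (a+b+m) := by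
    rw [Bint_eq (by positivity) ha]
    congr 2
    ring_nf
  rw [h1, Bint_eq hb ha, Gamma_poch hb m, Gamma_poch (by linarith : (0:ℝ) < a+b) m]
  have g1 := (Real.Gamma_pos_of_pos (show (0:ℝ) < a+b by linarith)).ne'
  have g2 := (poch_pos (show (0:ℝ) < a+b by linarith) m).ne'
  field_simp
  ring

/-- Gauss's summation theorem in the form we need. -/
lemma hasSum_gauss (ha : 0 < a) (hb : 0 < b) (hs : 0 < s) :
    HasSum (fun m => poch b m * cc s m / poch (a+b) m)
      (Gamma (a+b) * Gamma (a+s) / (Gamma a * Gamma (a+b+s))) := by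
  have hab : (0:ℝ) < a + b := by linarith
  set F : ℕ → ℝ → ℝ := fun m t => cc s m * (t^m * (t^(b-1)*(1-t)^(a-1))) with hF
  have hFint : ∀ m, Integrable (F m) (volume.restrict (Set.Ioo (0:ℝ) 1)) := by
    intro m
    have h1 : IntegrableOn (fun t => cc s m * (t^((b+m)-1)*(1-t)^(a-1))) (Set.Ioo (0:ℝ) 1) :=
      ((integrableOn_beta (by positivity : (0:ℝ) < b + m) ha).const_mul (cc s m))
    apply h1.congr_fun _ measurableSet_Ioo
    intro t ht
    dsimp only [hF]
    have ht0 : (0:ℝ) < t := ht.1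
    rw [show (b + (m:ℝ)) - 1 = (b-1) + m by ring, Real.rpow_add ht0, Real.rpow_natCast]
    ring
  have hFval : ∀ m, ∫ t in Set.Ioo (0:ℝ) 1, F m t
      = cc s m * (Bint b a * (poch b m / poch (a+b) m)) := by
    intro m
    rw [← Bint_shift ha hb m]
    simp only [hF]
    rw [integral_const_mul]
    congr 1
    rw [Bint]
    apply setIntegral_congr_fun measurableSet_Ioo
    intro t ht
    dsimp only
    rw [show (b + (m:ℝ)) - 1 = (b-1) + m by ring, Real.rpow_add ht.1, Real.rpow_natCast]
    ring
  have hFnorm : ∀ m, ∫ t in Set.Ioo (0:ℝ) 1, ‖F m t‖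
      = |cc s m| * (Bint b a * (poch b m / poch (a+b) m)) := by
    intro m
    have : ∀ t ∈ Set.Ioo (0:ℝ) 1, ‖F m t‖ = |cc s m| * (t^m * (t^(b-1)*(1-t)^(a-1))) := by
      intro t ht
      rw [hF]
      have h1 : (0:ℝ) ≤ t^m * (t^(b-1)*(1-t)^(a-1)) := by
        have := ht.1.le
        have h2 : (0:ℝ) ≤ 1 - t := by linarith [ht.2.le]
        positivity
      rw [Real.norm_eq_abs, abs_mul, abs_of_nonneg h1]
    rw [setIntegral_congr_fun measurableSet_Ioo this]
    rw [integral_const_mul]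
    have h2 : ∫ t in Set.Ioo (0:ℝ) 1, t^m * (t^(b-1)*(1-t)^(a-1))
        = Bint b a * (poch b m / poch (a+b) m) := by
      rw [← Bint_shift ha hb m, Bint]
      apply setIntegral_congr_fun measurableSet_Ioo
      intro t ht
      dsimp only
      rw [show (b + (m:ℝ)) - 1 = (b-1) + m by ring, Real.rpow_add ht.1, Real.rpow_natCast]
      ring
    rw [h2]
  have hratio : ∀ m : ℕ, poch b m / poch (a+b) m ≤ 1 := by
    intro m
    rw [div_le_one (poch_pos hab m)]
    exact poch_le_poch hb (by linarith) m
  have hratio0 : ∀ m : ℕ, 0 ≤ poch b m / poch (a+b) m := by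
    intro m
    exact le_of_lt (div_pos (poch_pos hb m) (poch_pos hab m))
  have hBpos := Bint_pos hb ha
  have hsumnorm : Summable (fun m => ∫ t in Set.Ioo (0:ℝ) 1, ‖F m t‖) := by
    apply Summable.of_nonneg_of_le
      (fun m => by
        rw [hFnorm m]
        exact mul_nonneg (abs_nonneg _) (mul_nonneg hBpos.le (hratio0 m)))
      (fun m => ?_) ((summable_abs_cc hs).mul_right (Bint b a))
    rw [hFnorm m]
    have h1 : Bint b a * (poch b m / poch (a+b) m) ≤ Bint b a * 1 :=
      mul_le_mul_of_nonneg_left (hratio m) hBpos.le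
    calc |cc s m| * (Bint b a * (poch b m / poch (a+b) m))
        ≤ |cc s m| * (Bint b a * 1) := mul_le_mul_of_nonneg_left h1 (abs_nonneg _)
      _ = |cc s m| * Bint b a := by ring
  -- swap sum and integral
  have hswap := MeasureTheory.integral_tsum_of_summable_integral_norm hFint hsumnorm
  -- identify pointwise sum
  have hpt : ∀ t ∈ Set.Ioo (0:ℝ) 1, (∑' m, F m t) = t^(b-1)*(1-t)^(a+s-1) := by
    intro t ht
    have hbin := (hasSum_binomial hs ht.1.le ht.2).mul_right (t^(b-1)*(1-t)^(a-1))
    have he : (fun m => cc s m * t ^ m * (t^(b-1)*(1-t)^(a-1))) = fun m => F m t := by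
      funext m; simp only [hF]; ring
    rw [he] at hbin
    rw [hbin.tsum_eq]
    have h1t : (0:ℝ) < 1 - t := by linarith [ht.2]
    rw [show a+s-1 = s + (a-1) by ring, Real.rpow_add h1t]
    ring
  have hint2 : (∫ t in Set.Ioo (0:ℝ) 1, ∑' m, F m t) = Bint b (a+s) := by
    rw [Bint]
    exact setIntegral_congr_fun measurableSet_Ioo hpt
  have hvals : (fun m => ∫ t in Set.Ioo (0:ℝ) 1, F m t)
      = fun m => Bint b a * (poch b m * cc s m / poch (a+b) m) := by
    funext m
    rw [hFval m]
    have := (poch_pos hab m).ne'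
    field_simp
  rw [hint2, hvals] at hswap
  rw [tsum_mul_left] at hswap
  -- summability of the Gauss terms
  set g : ℕ → ℝ := fun m => poch b m * cc s m / poch (a+b) m with hg
  have hsg : Summable g := by
    apply Summable.of_norm_bounded (summable_abs_cc hs)
    intro m
    rw [hg]
    simp only [Real.norm_eq_abs]
    rw [abs_div, abs_mul, abs_of_pos (poch_pos hb m), abs_of_pos (poch_pos hab m)]
    rw [div_le_iff₀ (poch_pos hab m)]
    calc poch b m * |cc s m| ≤ poch (a+b) m * |cc s m| :=
          mul_le_mul_of_nonneg_right (poch_le_poch hb (by linarith) m) (abs_nonneg _)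
      _ = |cc s m| * poch (a+b) m := by ring
  have htsum : ∑' m, g m = Gamma (a+b) * Gamma (a+s) / (Gamma a * Gamma (a+b+s)) := by
    have hBne := (Bint_pos hb ha).ne'
    have h1 : ∑' m, g m = Bint b (a+s) / Bint b a := by
      field_simp
      linarith [hswap]
    rw [h1, Bint_eq hb (by linarith : (0:ℝ) < a+s), Bint_eq hb ha]
    have e1 : b + (a+s) = a+b+s := by ring
    have e2 : b + a = a+b := by ring
    rw [e1, e2]
    have g1 := (Real.Gamma_pos_of_pos hb).ne'
    have g2 := (Real.Gamma_pos_of_pos ha).ne'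
    have g3 := (Real.Gamma_pos_of_pos hab).ne'
    have g4 := (Real.Gamma_pos_of_pos (show (0:ℝ) < a+b+s by linarith)).ne'
    have g5 := (Real.Gamma_pos_of_pos (show (0:ℝ) < a+s by linarith)).ne'
    field_simp
  rw [← htsum]
  exact hsg.hasSum


lemma integrableOn_J {c : ℝ} (hc : 0 < c) (n : ℕ) :
    IntegrableOn (fun x => Real.exp (-c*x) * (1 - Real.exp (-x))^n) (Set.Ioi (0:ℝ)) := by
  apply MeasureTheory.Integrable.mono (exp_neg_integrableOn_Ioi 0 hc)
    ((Continuous.aestronglyMeasurable (by continuity)).restrict)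
  filter_upwards [ae_restrict_mem measurableSet_Ioi] with x hx
  have h1 : 0 < Real.exp (-x) := Real.exp_pos _
  have h2 : Real.exp (-x) ≤ 1 := by
    rw [Real.exp_le_one_iff]; simp [le_of_lt (show (0:ℝ) < x from hx)]
  have h3 : (0:ℝ) ≤ 1 - Real.exp (-x) := by linarith
  rw [Real.norm_eq_abs, abs_mul, abs_of_pos (Real.exp_pos _), abs_of_nonneg (pow_nonneg h3 n),
    Real.norm_eq_abs, abs_of_pos (Real.exp_pos _)]
  calc Real.exp (-c*x) * (1 - Real.exp (-x))^n ≤ Real.exp (-c*x) * 1 := by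
        apply mul_le_mul_of_nonneg_left (pow_le_one₀ h3 (by linarith)) (Real.exp_pos _).le
    _ = Real.exp (-c*x) := mul_one _
  
lemma J_eval {c : ℝ} (hc : 0 < c) (n : ℕ) :
    ∫ x in Set.Ioi (0:ℝ), Real.exp (-c*x) * (1 - Real.exp (-x))^n
      = (n.factorial : ℝ) / poch c (n+1) := by
  induction n generalizing c with
  | zero =>
      simp only [pow_zero, mul_one, Nat.factorial_zero, Nat.cast_one]
      rw [poch_succ, poch_zero, one_mul]
      have h := integral_rpow_mul_exp_neg_mul_Ioi one_pos hc
      simp only [sub_self, Real.rpow_zero, one_mul, Real.Gamma_one, mul_one,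
        Real.rpow_one] at h
      simpa [neg_mul] using h
  | succ n ih =>
      have key : ∀ x : ℝ, Real.exp (-c*x) * (1 - Real.exp (-x))^(n+1)
          = Real.exp (-c*x) * (1 - Real.exp (-x))^n
            - Real.exp (-(c+1)*x) * (1 - Real.exp (-x))^n := by
        intro x
        have : Real.exp (-(c+1)*x) = Real.exp (-c*x) * Real.exp (-x) := by
          rw [← Real.exp_add]; ring_nf
        rw [pow_succ, this]; ring
      rw [MeasureTheory.setIntegral_congr_fun measurableSet_Ioi (fun x _ => key x)]
      rw [MeasureTheory.integral_sub (integrableOn_J hc n) (integrableOn_J (by linarith) n)]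
      rw [ih hc, ih (by linarith : (0:ℝ) < c + 1)]
      -- algebra: n!/poch c (n+1) - n!/poch (c+1) (n+1) = (n+1)!/poch c (n+2)
      have e1 : poch c (n+2) = poch c (n+1) * (c + ((n:ℝ)+1)) := by
        rw [show n+2 = n+1+1 from rfl, poch_succ]; push_cast; ring
      have e2 : poch c (n+2) = c * poch (c+1) (n+1) := by
        rw [show n+2 = n+1+1 from rfl]; exact poch_succ_left c (n+1)
      have p1 := (poch_pos hc (n+1)).ne'
      have p2 := (poch_pos (by linarith : (0:ℝ) < c+1) (n+1)).ne'
      have p3 := (poch_pos hc (n+2)).ne'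
      rw [div_sub_div _ _ p1 p2]
      rw [div_eq_div_iff (by positivity) p3]
      have efact : ((n+1).factorial : ℝ) = (n.factorial : ℝ) * (n+1) := by
        rw [Nat.factorial_succ]; push_cast; ring
      rw [efact]
      push_cast
      linear_combination ((n.factorial:ℝ) * poch (c+1) (n+1)) * e1
        - ((n.factorial:ℝ) * poch c (n+1)) * e2

end RhoAux

set_option maxHeartbeats 1000000 in
open RhoAux in
theorem one_sub_integral_rho (a b s : ℝ) (ha : 0 < a) (hb : 0 < b) (hs : 0 < s) :
    1 - ∫ x in Set.Ioi (0:ℝ), rho a b s x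
      = Gamma (a + b) * Gamma (a + s) / (Gamma a * Gamma (a + b + s)) := by
  have hab : (0:ℝ) < a + b := by linarith
  set κ : ℕ → ℝ := fun n =>
    b * s * (poch (1+b) n * poch (1-s) n / (poch 2 n * n.factorial)) with hκ
  set F : ℕ → ℝ → ℝ := fun n x => κ n * (Real.exp (-(a+b)*x) * (1 - Real.exp (-x))^n) with hFdef
  have hκ_eq : ∀ n, κ n = -(poch b (n+1) * cc s (n+1)) / n.factorial := by
    intro n
    have h1 : poch b (n+1) = b * poch (1+b) n := by
      rw [poch_succ_left, add_comm b 1]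
    have h2 : poch (-s) (n+1) = -s * poch (1-s) n := by
      rw [poch_succ_left]
      congr 1
      ring_nf
    have h3 : cc s (n+1) = poch (-s) (n+1) / (n+1).factorial := rfl
    have h4 : poch 2 n = ((n+1).factorial : ℝ) := poch_two n
    have hne1 : ((n.factorial : ℝ)) ≠ 0 := Nat.cast_ne_zero.mpr n.factorial_ne_zero
    have hne2 : (((n+1).factorial : ℝ)) ≠ 0 := Nat.cast_ne_zero.mpr (n+1).factorial_ne_zero
    simp only [hκ]
    rw [h3, h2, h1, h4]
    field_simp
  -- value of each integral
  have hFval : ∀ n, ∫ x in Set.Ioi (0:ℝ), F n x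
      = -(poch b (n+1) * cc s (n+1) / poch (a+b) (n+1)) := by
    intro n
    simp only [hFdef]
    rw [integral_const_mul, J_eval hab n, hκ_eq n]
    have hne1 : ((n.factorial : ℝ)) ≠ 0 := Nat.cast_ne_zero.mpr n.factorial_ne_zero
    have hne3 := (poch_pos hab (n+1)).ne'
    field_simp
  have hFint : ∀ n, Integrable (F n) (volume.restrict (Set.Ioi (0:ℝ))) := by
    intro n
    exact (integrableOn_J hab n).const_mul (κ n)
  have habs : ∀ n, ∫ x in Set.Ioi (0:ℝ), ‖F n x‖
      = |κ n| * ((n.factorial : ℝ) / poch (a+b) (n+1)) := by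
    intro n
    rw [← J_eval hab n, ← integral_const_mul]
    apply setIntegral_congr_fun measurableSet_Ioi
    intro x hx
    have h1 : Real.exp (-x) ≤ 1 := by
      rw [Real.exp_le_one_iff]; simp [le_of_lt (show (0:ℝ) < x from hx)]
    have h2 : (0:ℝ) ≤ 1 - Real.exp (-x) := by linarith
    simp only [hFdef]
    rw [Real.norm_eq_abs, abs_mul,
      abs_of_nonneg (mul_nonneg (Real.exp_pos (-(a+b)*x)).le (pow_nonneg h2 n))]
  have hnormsum : Summable (fun n => ∫ x in Set.Ioi (0:ℝ), ‖F n x‖) := by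
    have hshift : Summable (fun n => |cc s (n+1)|) := by
      have := summable_abs_cc hs
      exact (summable_nat_add_iff (f := fun m => |cc s m|) 1).mpr this
    apply Summable.of_nonneg_of_le
      (fun n => integral_nonneg (fun x => norm_nonneg _)) (fun n => ?_) hshift
    rw [habs n, hκ_eq n]
    have hne1 : (0:ℝ) < (n.factorial : ℝ) := by positivity
    have hp1 := poch_pos hb (n+1)
    have hp2 := poch_pos hab (n+1)
    rw [abs_div, abs_neg, abs_mul, abs_of_pos hp1, abs_of_pos hne1]
    rw [div_mul_div_comm]
    rw [div_le_iff₀ (by positivity)]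
    calc poch b (n+1) * |cc s (n+1)| * (n.factorial:ℝ)
        ≤ poch (a+b) (n+1) * |cc s (n+1)| * (n.factorial:ℝ) := by
          apply mul_le_mul_of_nonneg_right
            (mul_le_mul_of_nonneg_right (poch_le_poch hb (by linarith) _) (abs_nonneg _)) hne1.le
      _ = |cc s (n+1)| * ((n.factorial:ℝ) * poch (a+b) (n+1)) := by ring
  -- pointwise identity
  have hpt : ∀ x ∈ Set.Ioi (0:ℝ), rho a b s x = ∑' n, F n x := by
    intro x hx
    have he : ∀ n : ℕ, F n x = (b * s * Real.exp (-(a+b)*x)) *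
        (poch (1+b) n * poch (1-s) n / (poch 2 n * n.factorial) * (1 - Real.exp (-x))^n) := by
      intro n
      simp only [hFdef, hκ]
      ring
    rw [funext he, tsum_mul_left]
    rfl
  -- put it together
  have hswap := MeasureTheory.integral_tsum_of_summable_integral_norm hFint hnormsum
  have hint : ∫ x in Set.Ioi (0:ℝ), rho a b s x
      = ∑' n, ∫ x in Set.Ioi (0:ℝ), F n x := by
    rw [setIntegral_congr_fun measurableSet_Ioi hpt, ← hswap]
  set R := Gamma (a+b) * Gamma (a+s) / (Gamma a * Gamma (a+b+s)) with hR
  have hg := hasSum_gauss ha hb hs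
  have hg0 : poch b 0 * cc s 0 / poch (a+b) 0 = 1 := by
    rw [poch_zero, poch_zero, cc_zero]; norm_num
  have hsummg : Summable (fun m => poch b m * cc s m / poch (a+b) m) := hg.summable
  have htail : ∑' n, poch b (n+1) * cc s (n+1) / poch (a+b) (n+1) = R - 1 := by
    have := Summable.tsum_eq_zero_add hsummg
    rw [hg.tsum_eq, hg0] at this
    linarith [this]
  rw [hint]
  have : ∑' n, ∫ x in Set.Ioi (0:ℝ), F n x
      = -(R - 1) := by
    rw [funext hFval, ← htail, tsum_neg]
  rw [this]
  ring
end

section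
/- Define g_{a,b,s}(x) = (x+1)^{(1-a-b)/s - 1} · (s(( x+1)^{1/s} - 1)/x)^{b-1} for x > 0. Then g_{a,b,s}(x) → 1 as x → 0+, and the derivative of G = -log g_{a,b,s} satisfies G'(x) = (a+s)/(s(x+1)) + (b-1)(1/x - 1/(s(x+1)((x+1)^{1/s}-1))), with G'(0+) = (s+a)/s + (b-1)(s+1)/(2s). -/
open Real Filter
open Set Topology

private lemma auxDeriv (s : ℝ) (hs : 0 < s) (x : ℝ) (hx : -1 < x) :
    HasDerivAt (fun y : ℝ => (y+1)^(1/s)) ((1/s) * (x+1)^(1/s - 1)) x := by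
  have h := ((hasDerivAt_id x).add_const 1).rpow_const (p := 1/s)
    (Or.inl (by simpa using (by linarith : x + 1 ≠ 0)))
  simpa using h

private lemma auxLt (s : ℝ) (hs : 0 < s) (x : ℝ) (hx : 0 < x) : 1 < (x+1)^(1/s) := by
  rw [Real.one_lt_rpow_iff_of_pos (by linarith)]
  exact Or.inl ⟨by linarith, by positivity⟩

private lemma auxSlope (s : ℝ) (hs : 0 < s) :
    Tendsto (fun x : ℝ => ((x+1)^(1/s) - 1)/x) (𝓝[>] 0) (𝓝 (1/s)) := by
  have hD : HasDerivAt (fun y : ℝ => (y+1)^(1/s)) (1/s) 0 := by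
    have h := ((hasDerivAt_id (0:ℝ)).add_const 1).rpow_const (p := 1/s) (Or.inl (by norm_num))
    simpa using h
  have h1 := hasDerivAt_iff_tendsto_slope.mp hD
  have h2 := h1.mono_left (nhdsWithin_mono 0 (by intro y hy; exact ne_of_gt hy))
  refine h2.congr (fun y => ?_)
  simp [slope_def_field]

noncomputable def gBeta (a b s x : ℝ) : ℝ :=
  (x + 1) ^ ((1 - a - b) / s - 1) * (s * ((x + 1) ^ (1 / s) - 1) / x) ^ (b - 1)

theorem gBeta_properties (a b s : ℝ) (ha : 0 < a) (hb : 0 < b) (hs : 0 < s) :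
    Tendsto (gBeta a b s) (nhdsWithin 0 (Set.Ioi 0)) (nhds 1) ∧
    (∀ x > (0:ℝ), deriv (fun y => -Real.log (gBeta a b s y)) x
        = (a + s) / (s * (x + 1))
          + (b - 1) * (1 / x - 1 / (s * (x + 1) * ((x + 1) ^ (1 / s) - 1)))) ∧
    Tendsto (deriv (fun y => -Real.log (gBeta a b s y)))
      (nhdsWithin 0 (Set.Ioi 0))
      (nhds ((s + a) / s + (b - 1) * (s + 1) / (2 * s))) := by
  -- B limit : s * ((x+1)^(1/s) - 1) / x → 1
  have hB : Tendsto (fun x : ℝ => s * ((x+1)^(1/s) - 1) / x) (𝓝[>] 0) (𝓝 1) := by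
    have h := (auxSlope s hs).const_mul s
    have hval : s * (1/s) = 1 := by field_simp
    rw [hval] at h
    exact h.congr (fun x => by ring)
  -- Part 1
  have part1 : Tendsto (gBeta a b s) (𝓝[>] 0) (𝓝 1) := by
    have hA : Tendsto (fun x : ℝ => (x+1)^((1-a-b)/s - 1)) (𝓝[>] 0) (𝓝 1) := by
      have hc : ContinuousAt (fun x : ℝ => (x+1)^((1-a-b)/s - 1)) 0 :=
        (continuousAt_id.add continuousAt_const).rpow_const (Or.inl (by norm_num))
      have h2 : Tendsto (fun x : ℝ => (x+1)^((1-a-b)/s - 1)) (𝓝[>] 0)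
          (𝓝 ((0+1)^((1-a-b)/s - 1))) := hc.tendsto.mono_left nhdsWithin_le_nhds
      simpa using h2
    have := hA.mul (hB.rpow_const (p := b-1) (Or.inl one_ne_zero))
    unfold gBeta
    simpa only [Real.one_rpow, mul_one, one_mul] using this
  -- Part 2
  have part2 : ∀ x > (0:ℝ), deriv (fun y => -Real.log (gBeta a b s y)) x
      = (a + s) / (s * (x + 1))
        + (b - 1) * (1 / x - 1 / (s * (x + 1) * ((x + 1) ^ (1 / s) - 1))) := by
    intro x hx
    have hx1 : (0:ℝ) < x + 1 := by linarith
    have ht1 : 1 < (x+1)^(1/s) := auxLt s hs x hx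
    have hu : 0 < (x+1)^(1/s) - 1 := by linarith
    set c : ℝ := (1-a-b)/s - 1 with hc
    have hev : (fun y => -Real.log (gBeta a b s y)) =ᶠ[𝓝 x]
        (fun y => -(c * Real.log (y+1) + (b-1) * Real.log (s * ((y+1)^(1/s) - 1) / y))) := by
      filter_upwards [isOpen_Ioi.mem_nhds hx] with y hy
      have hy0 : (0:ℝ) < y := hy
      have hy1 : (0:ℝ) < y + 1 := by linarith
      have hty : 1 < (y+1)^(1/s) := auxLt s hs y hy0
      have hQpos : 0 < s * ((y+1)^(1/s) - 1) / y := by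
        apply div_pos _ hy0; apply mul_pos hs; linarith
      have hApos : (0:ℝ) < (y+1)^c := Real.rpow_pos_of_pos hy1 _
      unfold gBeta
      rw [Real.log_mul (ne_of_gt hApos) (ne_of_gt (Real.rpow_pos_of_pos hQpos _)),
        Real.log_rpow hy1, Real.log_rpow hQpos]
    rw [hev.deriv_eq]
    have h1 : HasDerivAt (fun y : ℝ => Real.log (y+1)) (1/(x+1)) x := by
      have := ((hasDerivAt_id x).add_const 1).log (by simpa using ne_of_gt hx1)
      simpa using this
    have hN : HasDerivAt (fun y : ℝ => s * ((y+1)^(1/s) - 1))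
        (s * ((1/s) * (x+1)^(1/s - 1))) x :=
      ((auxDeriv s hs x (by linarith)).sub_const 1).const_mul s
    have hQ := hN.div (hasDerivAt_id x) (ne_of_gt hx)
    have hQx : s * ((x+1)^(1/s) - 1) / x ≠ 0 := by
      apply ne_of_gt; apply div_pos _ hx; apply mul_pos hs; linarith
    have h2 := (hQ.log (by simpa using hQx))
    have hF := ((h1.const_mul c).add (h2.const_mul (b-1))).neg
    simp only [id_eq] at hF
    rw [(show HasDerivAt (fun y => -(c * Real.log (y+1) + (b-1) * Real.log (s * ((y+1)^(1/s) - 1) / y))) _ x from hF).deriv]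
    have hpow : (x+1)^(1/s - 1) = (x+1)^(1/s) / (x+1) := by
      rw [Real.rpow_sub hx1, Real.rpow_one]
    simp only [id_eq, Pi.div_apply, hpow]
    set t : ℝ := (x+1)^(1/s) with hts
    have ht0 : t ≠ 0 := by positivity
    have htm : t - 1 ≠ 0 := by linarith
    rw [hc]
    field_simp
    ring
  -- Part 3
  have part3 : Tendsto (deriv (fun y => -Real.log (gBeta a b s y)))
      (𝓝[>] 0) (𝓝 ((s + a) / s + (b - 1) * (s + 1) / (2 * s))) := by
    -- limit of first summand
    have hE1 : Tendsto (fun x : ℝ => (a+s)/(s*(x+1))) (𝓝[>] 0) (𝓝 ((a+s)/s)) := by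
      have hc : ContinuousAt (fun x : ℝ => (a+s)/(s*(x+1))) 0 := by
        apply ContinuousAt.div continuousAt_const
        · exact continuousAt_const.mul (continuousAt_id.add continuousAt_const)
        · simpa using hs.ne'
      have h2 : Tendsto (fun x : ℝ => (a+s)/(s*(x+1))) (𝓝[>] 0)
          (𝓝 ((a+s)/(s*(0+1)))) := hc.tendsto.mono_left nhdsWithin_le_nhds
      simpa using h2
    -- l'Hopital for φ(x)/x²
    set φ : ℝ → ℝ := fun x => s*(x+1)*((x+1)^(1/s) - 1) - x with hφ
    have hφd : ∀ x ∈ Ioo (0:ℝ) 1, HasDerivAt φ ((s+1)*((x+1)^(1/s) - 1)) x := by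
      intro x hx
      have hx1 : (0:ℝ) < x + 1 := by linarith [hx.1]
      have hmul : HasDerivAt (fun y : ℝ => s*(y+1)) s x := by
        simpa using ((hasDerivAt_id x).add_const 1).const_mul s
      have h := (hmul.mul ((auxDeriv s hs x (by linarith [hx.1])).sub_const 1)).sub
        (hasDerivAt_id x)
      have h' : HasDerivAt φ _ x := h
      convert h' using 1
      rw [Real.rpow_sub hx1, Real.rpow_one]
      field_simp
      ring
    have hgd : ∀ x ∈ Ioo (0:ℝ) 1, HasDerivAt (fun x : ℝ => x^2) (2*x) x := by
      intro x _; simpa using hasDerivAt_pow 2 x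
    have hg0 : ∀ x ∈ Ioo (0:ℝ) 1, 2*x ≠ 0 := fun x hx => by
      have := hx.1; positivity
    have hφ0 : Tendsto φ (𝓝[>] 0) (𝓝 0) := by
      have hc : ContinuousAt φ 0 := by
        apply ContinuousAt.sub _ continuousAt_id
        apply ContinuousAt.mul (continuousAt_const.mul (continuousAt_id.add continuousAt_const))
        exact ((continuousAt_id.add continuousAt_const).rpow_const (Or.inl (by norm_num))).sub
          continuousAt_const
      have h2 : Tendsto φ (𝓝[>] 0) (𝓝 (φ 0)) := hc.tendsto.mono_left nhdsWithin_le_nhds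
      simpa [hφ] using h2
    have hx20 : Tendsto (fun x : ℝ => x^2) (𝓝[>] 0) (𝓝 0) := by
      have := ((continuous_pow 2).tendsto (0:ℝ)).mono_left (nhdsWithin_le_nhds (s := Ioi 0))
      simpa using this
    have hdiv : Tendsto (fun x : ℝ => (s+1)*((x+1)^(1/s) - 1) / (2*x)) (𝓝[>] 0)
        (𝓝 ((s+1)/(2*s))) := by
      have h := (auxSlope s hs).const_mul ((s+1)/2)
      have hval : (s+1)/2 * (1/s) = (s+1)/(2*s) := by field_simp
      rw [hval] at h
      exact h.congr (fun x => by ring)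
    have hlh : Tendsto (fun x => φ x / x^2) (𝓝[>] 0) (𝓝 ((s+1)/(2*s))) :=
      HasDerivAt.lhopital_zero_right_on_Ioo zero_lt_one hφd hgd hg0 hφ0 hx20 hdiv
    -- limit of s(x+1)u/x
    have hinv : Tendsto (fun x : ℝ => s*(x+1)*(((x+1)^(1/s) - 1)/x)) (𝓝[>] 0) (𝓝 1) := by
      have hT1 : Tendsto (fun x : ℝ => s*(x+1)) (𝓝[>] 0) (𝓝 s) := by
        have hc : ContinuousAt (fun x : ℝ => s*(x+1)) 0 :=
          continuousAt_const.mul (continuousAt_id.add continuousAt_const)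
        have h2 : Tendsto (fun x : ℝ => s*(x+1)) (𝓝[>] 0) (𝓝 (s*(0+1))) :=
          hc.tendsto.mono_left nhdsWithin_le_nhds
        simpa using h2
      have h := hT1.mul (auxSlope s hs)
      have hval : s * (1/s) = 1 := by field_simp
      rwa [hval] at h
    have hinv2 : Tendsto (fun x : ℝ => (s*(x+1)*(((x+1)^(1/s) - 1)/x))⁻¹) (𝓝[>] 0) (𝓝 1) := by
      simpa using hinv.inv₀ one_ne_zero
    -- the difference term
    have hf : Tendsto (fun x : ℝ => 1/x - 1/(s*(x+1)*((x+1)^(1/s) - 1))) (𝓝[>] 0)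
        (𝓝 ((s+1)/(2*s))) := by
      have h := hlh.mul hinv2
      rw [mul_one] at h
      refine h.congr' ?_
      filter_upwards [self_mem_nhdsWithin] with x hx
      have hx0 : (0:ℝ) < x := hx
      have hx1 : (0:ℝ) < x + 1 := by linarith
      have hu : 0 < (x+1)^(1/s) - 1 := by linarith [auxLt s hs x hx0]
      rw [hφ]
      field_simp
    have hsum := hE1.add (hf.const_mul (b-1))
    have hval : (a+s)/s + (b-1)*((s+1)/(2*s)) = (s+a)/s + (b-1)*(s+1)/(2*s) := by ring
    rw [hval] at hsum
    refine hsum.congr' ?_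
    filter_upwards [self_mem_nhdsWithin] with x hx
    exact (part2 x hx).symm
  exact ⟨part1, part2, part3⟩
end

section
/- With g_{a,b,s}(x) = (x+1)^{(1-a-b)/s - 1} · (s((x+1)^{1/s} - 1)/x)^{b-1}, one has the first-order expansion g_{a,b,s}(x) = 1 + c_{a,b,s} x + o(x) as x → 0+, where c_{a,b,s} = (1 - 2a - b - s - bs)/(2s). -/
open Real Filter Asymptotics
open Topology

/-- Slope of `(x+1)^p` at `0` from the right tends to `p`. -/
lemma slope_rpow_aux (p : ℝ) :
    Tendsto (fun x : ℝ => ((x + 1) ^ p - 1) / x) (nhdsWithin 0 (Set.Ioi 0)) (𝓝 p) := by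
  have hd : HasDerivAt (fun x : ℝ => (x + 1) ^ p) p 0 := by
    have := (Real.hasDerivAt_rpow_const (x := (0:ℝ) + 1) (p := p)
      (Or.inl (by norm_num))).comp 0 ((hasDerivAt_id (0:ℝ)).add_const 1)
    simpa [Function.comp_def] using this
  rw [hasDerivAt_iff_tendsto_slope] at hd
  have h := hd.mono_left (nhdsWithin_mono _ (fun x hx => ne_of_gt hx))
  refine h.congr' ?_
  filter_upwards [self_mem_nhdsWithin] with x hx
  simp [slope_def_field, div_eq_div_iff]

theorem gBeta_first_order_expansion (a b s : ℝ) (ha : 0 < a) (hb : 0 < b) (hs : 0 < s) :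
    (fun x => gBeta a b s x - 1 - ((1 - 2 * a - b - s - b * s) / (2 * s)) * x)
      =o[nhdsWithin 0 (Set.Ioi 0)] (fun x => x) := by
  set l := nhdsWithin (0:ℝ) (Set.Ioi 0) with hl
  set α : ℝ := (1 - a - b) / s - 1 with hα
  set c : ℝ := (1 - 2 * a - b - s - b * s) / (2 * s) with hc
  set d : ℝ := (1 / s - 1) / 2 with hd
  have hx_pos : ∀ᶠ x in l, (0:ℝ) < x := self_mem_nhdsWithin
  -- Step 2: L'Hôpital for the second order expansion of (x+1)^(1/s)
  have hLH : Tendsto (fun x : ℝ => ((x + 1) ^ (1/s) - 1 - x / s) / x ^ 2) l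
      (𝓝 (1 / (2 * s) * (1 / s - 1))) := by
    apply HasDerivAt.lhopital_zero_nhdsGT
      (f' := fun x : ℝ => 1/s * (x + 1) ^ (1/s - 1) - 1/s) (g' := fun x : ℝ => 2 * x)
    · filter_upwards [hx_pos] with x hx
      have h1 : HasDerivAt (fun x : ℝ => (x + 1) ^ (1/s)) (1/s * (x + 1) ^ (1/s - 1)) x := by
        have := (Real.hasDerivAt_rpow_const (x := x + 1) (p := 1/s)
          (Or.inl (by positivity))).comp x ((hasDerivAt_id x).add_const 1)
        simpa [Function.comp_def] using this
      exact (h1.sub_const 1).sub ((hasDerivAt_id x).div_const s)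
    · filter_upwards with x
      simpa using hasDerivAt_pow 2 x
    · filter_upwards [hx_pos] with x hx
      positivity
    · have h1 : Tendsto (fun x : ℝ => (x + 1) ^ (1/s)) l (𝓝 1) := by
        have hc : ContinuousAt (fun x : ℝ => (x + 1) ^ (1/s)) 0 := by
          apply ContinuousAt.rpow_const
          · fun_prop
          · left; norm_num
        have h2 : Tendsto (fun x : ℝ => (x + 1) ^ (1/s)) l (𝓝 ((0 + 1) ^ (1/s))) :=
          hc.tendsto.mono_left nhdsWithin_le_nhds
        simpa using h2
      have := (h1.sub_const 1).sub (((continuous_id.div_const s).tendsto 0).mono_left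
        nhdsWithin_le_nhds)
      simpa using this
    · have : Tendsto (fun x : ℝ => x ^ 2) (𝓝 0) (𝓝 0) := by
        simpa using (continuous_pow 2).tendsto (0:ℝ)
      exact this.mono_left nhdsWithin_le_nhds
    · have h := (slope_rpow_aux (1/s - 1)).const_mul (1 / (2 * s))
      refine h.congr' ?_
      filter_upwards [hx_pos] with x hx
      have hx' : x ≠ 0 := ne_of_gt hx
      have hs' : s ≠ 0 := ne_of_gt hs
      generalize (x + 1 : ℝ) ^ (1/s - 1) = A
      field_simp
  -- Step 3: first order expansion of φ(x) = s((x+1)^{1/s}-1)/x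
  have hphi : Tendsto (fun x : ℝ => (s * ((x + 1) ^ (1/s) - 1) / x - 1) / x) l (𝓝 d) := by
    have h := hLH.const_mul s
    have hval : s * (1 / (2 * s) * (1 / s - 1)) = d := by
      rw [hd]; field_simp
    rw [hval] at h
    refine h.congr' ?_
    filter_upwards [hx_pos] with x hx
    have hx' : x ≠ 0 := ne_of_gt hx
    have hs' : s ≠ 0 := ne_of_gt hs
    generalize (x + 1 : ℝ) ^ (1/s) = A
    field_simp
  have hphi1 : Tendsto (fun x : ℝ => s * ((x + 1) ^ (1/s) - 1) / x) l (𝓝 1) := by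
    have h0 : Tendsto (fun x : ℝ => x) l (𝓝 0) := tendsto_id.mono_left nhdsWithin_le_nhds
    have h' : Tendsto (fun x : ℝ => (s * ((x + 1) ^ (1/s) - 1) / x - 1) / x * x + 1) l
        (𝓝 (d * 0 + 1)) := (hphi.mul h0).add tendsto_const_nhds
    rw [show d * 0 + 1 = (1:ℝ) by ring] at h'
    refine h'.congr' ?_
    filter_upwards [hx_pos] with x hx
    have hx' : x ≠ 0 := ne_of_gt hx
    generalize s * ((x + 1 : ℝ) ^ (1/s) - 1) / x = A
    field_simp
    ring
  -- Step 4: first order expansion of ψ(x) = φ(x)^(b-1)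
  have hpsi : Tendsto (fun x : ℝ => ((s * ((x + 1) ^ (1/s) - 1) / x) ^ (b - 1) - 1) / x) l
      (𝓝 ((b - 1) * d)) := by
    have hder : HasDerivAt (fun t : ℝ => t ^ (b - 1)) (b - 1) 1 := by
      have := Real.hasDerivAt_rpow_const (x := (1:ℝ)) (p := b - 1) (Or.inl one_ne_zero)
      simpa using this
    have hlo : (fun t : ℝ => t ^ (b - 1) - 1 - (t - 1) * (b - 1)) =o[𝓝 1] (fun t => t - 1) := by
      have := hasDerivAt_iff_isLittleO.mp hder
      simpa [smul_eq_mul] using this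
    have hcomp : (fun x : ℝ => (s * ((x + 1) ^ (1/s) - 1) / x) ^ (b - 1) - 1 -
        (s * ((x + 1) ^ (1/s) - 1) / x - 1) * (b - 1))
          =o[l] (fun x => s * ((x + 1) ^ (1/s) - 1) / x - 1) := hlo.comp_tendsto hphi1
    have hbigO : (fun x : ℝ => s * ((x + 1) ^ (1/s) - 1) / x - 1) =O[l] (fun x => x) := by
      apply isBigO_of_div_tendsto_nhds ?_ d
      · exact hphi
      · filter_upwards [hx_pos] with x hx h
        exact absurd h (ne_of_gt hx)
    have ho := hcomp.trans_isBigO hbigO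
    have hq : Tendsto (fun x : ℝ => ((s * ((x + 1) ^ (1/s) - 1) / x) ^ (b - 1) - 1 -
        (s * ((x + 1) ^ (1/s) - 1) / x - 1) * (b - 1)) / x) l (𝓝 0) :=
      ho.tendsto_div_nhds_zero
    have h := hq.add (hphi.mul_const (b - 1))
    rw [show (0:ℝ) + d * (b - 1) = (b - 1) * d by ring] at h
    refine h.congr' ?_
    filter_upwards [hx_pos] with x hx
    rw [div_mul_eq_mul_div, ← add_div]
    ring_nf
  -- Step 5: first order expansion of (x+1)^α
  have hA := slope_rpow_aux α
  have hpow1 : Tendsto (fun x : ℝ => (x + 1) ^ α) l (𝓝 1) := by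
    have hc : ContinuousAt (fun x : ℝ => (x + 1) ^ α) 0 := by
      apply ContinuousAt.rpow_const
      · fun_prop
      · left; norm_num
    have h2 : Tendsto (fun x : ℝ => (x + 1) ^ α) l (𝓝 ((0 + 1) ^ α)) :=
      hc.tendsto.mono_left nhdsWithin_le_nhds
    simpa using h2
  -- Step 6: combine
  rw [isLittleO_iff_tendsto']
  swap
  · filter_upwards [hx_pos] with x hx h
    exact absurd h (ne_of_gt hx)
  have h := ((hpow1.mul hpsi).add hA).sub_const c
  have hval : 1 * ((b - 1) * d) + α - c = 0 := by
    rw [hd, hα, hc]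
    field_simp
    first
    | ring
    | exact Or.inl (by ring)
    | exact Or.inr (by ring)
      | exact Or.inl trivial
      | tauto
  rw [hval] at h
  refine h.congr' ?_
  filter_upwards [hx_pos] with x hx
  rw [gBeta]
  have hx' : x ≠ 0 := ne_of_gt hx
  generalize (s * ((x + 1 : ℝ) ^ (1/s) - 1) / x) ^ (b - 1) = B
  generalize (x + 1 : ℝ) ^ α = P
  field_simp
  first
  | ring
  | exact Or.inl (by ring)
  | exact Or.inr (by ring)
      | exact Or.inl trivial
      | tauto
end
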